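/- For every integer N ≥ 2, with ξ_n^N := 1 for n < N, ξ_n^N := (2 log N − log n)/log N for N ≤ n ≤ N², ξ_n^N := 0 for n > N², and u_n^N := ξ_n^N √n, one has ∑_{n=2}^∞ |((n−1)/n)^{1/4} u_n^N − (n/(n−1))^{1/4} u_{n−1}^N|² ≤ 4/log N. In particular, this remainder tends to 0 as N → ∞. -/

import Mathlib

/-- The logarithmic cutoff `ξ_n^N`: equal to `1` for `n < N`,
to `(2 log N - log n)/log N` for `N ≤ n ≤ N²`, and to `0` for `n > N²`. -/
noncomputable def xi (N n : ℕ) : ℝ :=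
  if n < N then 1
  else if n ≤ N ^ 2 then (2 * Real.log N - Real.log n) / Real.log N
  else 0

/-- The remainder term of the regularized sequence `u_n^N = ξ_n^N √n`. -/
noncomputable def remainder (N : ℕ) : ℝ :=
  ∑' n : ℕ, |((((n : ℝ) + 1) / ((n : ℝ) + 2)) ^ ((1 : ℝ) / 4))
        * (xi N (n + 2) * Real.sqrt ((n : ℝ) + 2))
      - ((((n : ℝ) + 2) / ((n : ℝ) + 1)) ^ ((1 : ℝ) / 4))
        * (xi N (n + 1) * Real.sqrt ((n : ℝ) + 1))| ^ 2

lemma xi_of_lt {N n : ℕ} (h : n < N) : xi N n = 1 := if_pos h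

lemma xi_of_mid {N n : ℕ} (h1 : N ≤ n) (h2 : n ≤ N ^ 2) :
    xi N n = (2 * Real.log N - Real.log n) / Real.log N := by
  rw [xi, if_neg (by omega), if_pos h2]

lemma xi_of_gt {N n : ℕ} (hN : 1 ≤ N) (h : N ^ 2 < n) : xi N n = 0 := by
  have hle : N ≤ N ^ 2 := Nat.le_self_pow two_ne_zero N
  rw [xi, if_neg (by omega), if_neg (by omega)]

lemma logN_pos {N : ℕ} (hN : 2 ≤ N) : 0 < Real.log N :=
  Real.log_pos (by exact_mod_cast Nat.lt_of_lt_of_le one_lt_two hN)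

lemma xi_self {N : ℕ} (hN : 2 ≤ N) : xi N N = 1 := by
  rw [xi_of_mid le_rfl (Nat.le_self_pow two_ne_zero N)]
  have hL := logN_pos hN
  field_simp
  ring

lemma xi_sq {N : ℕ} (hN : 2 ≤ N) : xi N (N ^ 2) = 0 := by
  rw [xi_of_mid (Nat.le_self_pow two_ne_zero N) le_rfl]
  have : Real.log ((N : ℝ) ^ 2) = 2 * Real.log N := by
    rw [Real.log_pow]; push_cast; ring
  push_cast
  rw [this]
  simp

lemma term_eq (N n : ℕ) :
    |((((n : ℝ) + 1) / ((n : ℝ) + 2)) ^ ((1 : ℝ) / 4))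
        * (xi N (n + 2) * Real.sqrt ((n : ℝ) + 2))
      - ((((n : ℝ) + 2) / ((n : ℝ) + 1)) ^ ((1 : ℝ) / 4))
        * (xi N (n + 1) * Real.sqrt ((n : ℝ) + 1))| ^ 2
    = Real.sqrt ((n : ℝ) + 1) * Real.sqrt ((n : ℝ) + 2)
        * (xi N (n + 2) - xi N (n + 1)) ^ 2 := by
  set a : ℝ := (n : ℝ) + 1 with ha_def
  set b : ℝ := (n : ℝ) + 2 with hb_def
  have ha : 0 < a := by positivity
  have hb : 0 < b := by positivity
  have hb4 : (0:ℝ) < b ^ ((1:ℝ)/4) := Real.rpow_pos_of_pos hb _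
  have ha4 : (0:ℝ) < a ^ ((1:ℝ)/4) := Real.rpow_pos_of_pos ha _
  have hhalf : ∀ x : ℝ, 0 < x → x ^ ((1:ℝ)/2) = x ^ ((1:ℝ)/4) * x ^ ((1:ℝ)/4) := by
    intro x hx
    rw [← Real.rpow_add hx]; norm_num
  have h1 : (a / b) ^ ((1:ℝ)/4) * Real.sqrt b = a ^ ((1:ℝ)/4) * b ^ ((1:ℝ)/4) := by
    rw [Real.sqrt_eq_rpow, Real.div_rpow ha.le hb.le, hhalf b hb]
    field_simp
  have h2 : (b / a) ^ ((1:ℝ)/4) * Real.sqrt a = a ^ ((1:ℝ)/4) * b ^ ((1:ℝ)/4) := by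
    rw [Real.sqrt_eq_rpow, Real.div_rpow hb.le ha.le, hhalf a ha]
    field_simp
  have key : (a / b) ^ ((1:ℝ)/4) * (xi N (n + 2) * Real.sqrt b)
      - (b / a) ^ ((1:ℝ)/4) * (xi N (n + 1) * Real.sqrt a)
      = a ^ ((1:ℝ)/4) * b ^ ((1:ℝ)/4) * (xi N (n + 2) - xi N (n + 1)) := by
    have e1 : (a / b) ^ ((1:ℝ)/4) * (xi N (n + 2) * Real.sqrt b)
        = ((a / b) ^ ((1:ℝ)/4) * Real.sqrt b) * xi N (n + 2) := by ring
    have e2 : (b / a) ^ ((1:ℝ)/4) * (xi N (n + 1) * Real.sqrt a)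
        = ((b / a) ^ ((1:ℝ)/4) * Real.sqrt a) * xi N (n + 1) := by ring
    rw [e1, e2, h1, h2]; ring
  rw [key, sq_abs, mul_pow]
  have hsq : (a ^ ((1:ℝ)/4) * b ^ ((1:ℝ)/4)) ^ 2 = Real.sqrt a * Real.sqrt b := by
    have : (a ^ ((1:ℝ)/4) * b ^ ((1:ℝ)/4)) ^ 2
        = (a ^ ((1:ℝ)/4) * a ^ ((1:ℝ)/4)) * (b ^ ((1:ℝ)/4) * b ^ ((1:ℝ)/4)) := by ring
    rw [this, ← hhalf a ha, ← hhalf b hb, Real.sqrt_eq_rpow, Real.sqrt_eq_rpow]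
  rw [hsq]

lemma remainder_le {N : ℕ} (hN : 2 ≤ N) : remainder N ≤ 4 / Real.log N := by
  have hL : 0 < Real.log N := logN_pos hN
  have hNsq : N ≤ N ^ 2 := Nat.le_self_pow two_ne_zero N
  set f : ℕ → ℝ := fun n =>
    |((((n : ℝ) + 1) / ((n : ℝ) + 2)) ^ ((1 : ℝ) / 4))
        * (xi N (n + 2) * Real.sqrt ((n : ℝ) + 2))
      - ((((n : ℝ) + 2) / ((n : ℝ) + 1)) ^ ((1 : ℝ) / 4))
        * (xi N (n + 1) * Real.sqrt ((n : ℝ) + 1))| ^ 2 with hf_def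
  have hsupp : ∀ n ∉ Finset.Ico (N - 1) (N ^ 2 - 1), f n = 0 := by
    intro n hn
    rw [hf_def]
    simp only [Finset.mem_Ico, not_and_or, not_le, not_lt] at hn
    dsimp only
    rw [term_eq]
    suffices h : xi N (n + 2) - xi N (n + 1) = 0 by rw [h]; ring
    rcases hn with hn | hn
    · -- n < N - 1, so n + 2 ≤ N
      have h2 : n + 2 ≤ N := by omega
      rcases lt_or_eq_of_le h2 with h2 | h2
      · rw [xi_of_lt h2, xi_of_lt (by omega)]; ring
      · rw [show n + 2 = N from h2, xi_self hN, xi_of_lt (by omega)]; ring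
    · -- N^2 - 1 ≤ n, so n + 1 ≥ N^2
      have h2 : N ^ 2 < n + 2 := by omega
      rw [xi_of_gt (by omega) h2]
      rcases lt_or_eq_of_le (show N ^ 2 ≤ n + 1 by omega) with h1 | h1
      · rw [xi_of_gt (by omega) h1]; ring
      · rw [← h1, xi_sq hN]; ring
  have hrem : remainder N = ∑ n ∈ Finset.Ico (N - 1) (N ^ 2 - 1), f n := tsum_eq_sum hsupp
  have hbound : ∀ n ∈ Finset.Ico (N - 1) (N ^ 2 - 1),
      f n ≤ 2 * (Real.log ((n : ℝ) + 2) - Real.log ((n : ℝ) + 1)) / (Real.log N) ^ 2 := by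
    intro n hn
    simp only [Finset.mem_Ico] at hn
    have hm1 : N ≤ n + 1 := by omega
    have hm2 : n + 2 ≤ N ^ 2 := by omega
    rw [hf_def]
    dsimp only
    rw [term_eq, xi_of_mid (by omega) hm2, xi_of_mid hm1 (by omega)]
    set a : ℝ := (n : ℝ) + 1 with ha_def
    set b : ℝ := (n : ℝ) + 2 with hb_def
    have hn0 : (0:ℝ) ≤ (n:ℝ) := Nat.cast_nonneg n
    have ha1 : (1:ℝ) ≤ a := by rw [ha_def]; linarith
    have ha : (0:ℝ) < a := by positivity
    have hb : (0:ℝ) < b := by positivity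
    have hcast1 : ((n + 1 : ℕ) : ℝ) = a := by push_cast; ring
    have hcast2 : ((n + 2 : ℕ) : ℝ) = b := by push_cast; ring
    rw [hcast1, hcast2]
    have hdiff : ((2 * Real.log N - Real.log b) / Real.log N
        - (2 * Real.log N - Real.log a) / Real.log N) ^ 2
        = (Real.log b - Real.log a) ^ 2 / (Real.log N) ^ 2 := by
      rw [div_sub_div_same, div_pow]
      ring_nf
    rw [hdiff]
    set Δ : ℝ := Real.log b - Real.log a with hΔ_def
    have hΔ0 : 0 ≤ Δ := by
      have := Real.log_le_log ha (show a ≤ b by rw [ha_def, hb_def]; linarith)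
      linarith
    have hΔa : a * Δ ≤ 1 := by
      have h := Real.log_le_sub_one_of_pos (show (0:ℝ) < b / a by positivity)
      rw [Real.log_div hb.ne' ha.ne'] at h
      have hba : b / a - 1 = 1 / a := by
        rw [hb_def, ha_def]
        field_simp
        norm_num
      rw [hba] at h
      calc a * Δ ≤ a * (1 / a) := by
            apply mul_le_mul_of_nonneg_left _ ha.le
            exact h
        _ = 1 := by field_simp
    have hsab : Real.sqrt a * Real.sqrt b ≤ b := by
      calc Real.sqrt a * Real.sqrt b ≤ Real.sqrt b * Real.sqrt b := by
            gcongr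
            rw [ha_def, hb_def]; linarith
        _ = b := Real.mul_self_sqrt hb.le
    have hs0 : 0 ≤ Real.sqrt a * Real.sqrt b := by positivity
    have hb2a : b ≤ 2 * a := by rw [ha_def, hb_def]; linarith
    have hmain : Real.sqrt a * Real.sqrt b * Δ ^ 2 ≤ 2 * Δ := by
      nlinarith [mul_le_mul_of_nonneg_right hsab (mul_nonneg hΔ0 hΔ0),
        mul_le_mul_of_nonneg_right hΔa hΔ0, sq_nonneg Δ]
    calc Real.sqrt a * Real.sqrt b * (Δ ^ 2 / (Real.log N) ^ 2)
        = (Real.sqrt a * Real.sqrt b * Δ ^ 2) / (Real.log N) ^ 2 := by ring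
      _ ≤ 2 * Δ / (Real.log N) ^ 2 := by gcongr
  rw [hrem]
  set F : ℕ → ℝ := fun k => Real.log ((k : ℝ) + 1) with hF_def
  have hsum2 : ∑ n ∈ Finset.Ico (N - 1) (N ^ 2 - 1),
      2 * (Real.log ((n : ℝ) + 2) - Real.log ((n : ℝ) + 1)) / (Real.log N) ^ 2
      = 2 * (F (N ^ 2 - 1) - F (N - 1)) / (Real.log N) ^ 2 := by
    have hFn : ∀ n : ℕ, Real.log ((n : ℝ) + 2) - Real.log ((n : ℝ) + 1) = F (n + 1) - F n := by
      intro n; simp only [hF_def]; push_cast; ring_nf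
    have : ∑ n ∈ Finset.Ico (N - 1) (N ^ 2 - 1), (F (n + 1) - F n)
        = F (N ^ 2 - 1) - F (N - 1) := by
      rw [Finset.sum_Ico_eq_sub _ (by omega), Finset.sum_range_sub, Finset.sum_range_sub]
      ring
    calc ∑ n ∈ Finset.Ico (N - 1) (N ^ 2 - 1),
          2 * (Real.log ((n : ℝ) + 2) - Real.log ((n : ℝ) + 1)) / (Real.log N) ^ 2
        = ∑ n ∈ Finset.Ico (N - 1) (N ^ 2 - 1), 2 * (F (n + 1) - F n) / (Real.log N) ^ 2 := by
          apply Finset.sum_congr rfl; intro n _; rw [hFn n]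
      _ = 2 * (∑ n ∈ Finset.Ico (N - 1) (N ^ 2 - 1), (F (n + 1) - F n)) / (Real.log N) ^ 2 := by
          rw [← Finset.sum_div, ← Finset.mul_sum]
      _ = 2 * (F (N ^ 2 - 1) - F (N - 1)) / (Real.log N) ^ 2 := by rw [this]
  have hFval : F (N ^ 2 - 1) - F (N - 1) = Real.log N := by
    have h1 : ((N ^ 2 - 1 : ℕ) : ℝ) + 1 = ((N : ℝ)) ^ 2 := by
      have : (1:ℕ) ≤ N ^ 2 := by omega
      push_cast [Nat.cast_sub this]
      ring
    have h2 : ((N - 1 : ℕ) : ℝ) + 1 = (N : ℝ) := by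
      have : (1:ℕ) ≤ N := by omega
      push_cast [Nat.cast_sub this]
      ring
    simp only [hF_def, h1, h2, Real.log_pow]
    push_cast
    ring
  calc ∑ n ∈ Finset.Ico (N - 1) (N ^ 2 - 1), f n
      ≤ ∑ n ∈ Finset.Ico (N - 1) (N ^ 2 - 1),
          2 * (Real.log ((n : ℝ) + 2) - Real.log ((n : ℝ) + 1)) / (Real.log N) ^ 2 :=
        Finset.sum_le_sum hbound
    _ = 2 * (F (N ^ 2 - 1) - F (N - 1)) / (Real.log N) ^ 2 := hsum2
    _ = 2 * Real.log N / (Real.log N) ^ 2 := by rw [hFval]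
    _ = 2 / Real.log N := by field_simp
    _ ≤ 4 / Real.log N := by gcongr <;> norm_num

/-- For every integer `N ≥ 2`, the remainder is at most `4 / log N`; in particular it
tends to `0` as `N → ∞`. -/
theorem remainder_le_and_tendsto_zero :
    (∀ N : ℕ, 2 ≤ N → remainder N ≤ 4 / Real.log N)
      ∧ Filter.Tendsto remainder Filter.atTop (nhds 0) := by
  refine ⟨fun N hN => remainder_le hN, ?_⟩
  have hnonneg : ∀ N : ℕ, 0 ≤ remainder N := by
    intro N
    apply tsum_nonneg
    intro n
    positivity
  apply squeeze_zero' (Filter.Eventually.of_forall hnonneg)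
    (Filter.eventually_atTop.mpr ⟨2, fun N hN => remainder_le hN⟩)
  have hlog : Filter.Tendsto (fun N : ℕ => Real.log N) Filter.atTop Filter.atTop :=
    Real.tendsto_log_atTop.comp tendsto_natCast_atTop_atTop
  exact Filter.Tendsto.div_atTop tendsto_const_nhds hlog
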